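/- Let h(z) = Σ_{k=0}^∞ a_k z^k and g(z) = Σ_{k=1}^∞ b_k z^k be analytic on the unit disk 𝔻 with |h(z)| < 1 for all z ∈ 𝔻, and suppose there is η ∈ ℂ with |η| = 1 such that g'(z) = η z h'(z) for all z ∈ 𝔻. Then for every r with 0 ≤ r < 1 satisfying 5r + 2(1−r)·log(1−r) ≤ 1, one has |a_0| + Σ_{k=1}^∞ (|a_k| + |b_k|) r^k ≤ 1. (The critical radius r_0 ≈ 0.299824 solves 5x + 2(1−x)log(1−x) = 1.) -/

import Mathlib

open Metric Complex


lemma memEm {y : ℂ} (hy : y ∈ Metric.eball (0:ℂ) 1) : y ∈ ball (0:ℂ) 1 := by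
  rw [Metric.mem_eball, edist_zero_right, enorm_eq_nnnorm] at hy
  rw [mem_ball_zero_iff]
  exact_mod_cast hy

lemma memEm' {y : ℂ} (hy : y ∈ ball (0:ℂ) 1) : y ∈ Metric.eball (0:ℂ) 1 := by
  rw [Metric.mem_eball, edist_zero_right, enorm_eq_nnnorm]
  rw [mem_ball_zero_iff] at hy
  exact_mod_cast hy

lemma reprPS {c : ℕ → ℂ} {F : ℂ → ℂ}
    (hc : ∀ z ∈ ball (0:ℂ) 1, HasSum (fun k => c k * z ^ k) (F z)) :
    HasFPowerSeriesOnBall F (FormalMultilinearSeries.ofScalars ℂ c) 0 1 := by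
  constructor
  · refine ENNReal.le_of_forall_nnreal_lt (fun t ht => ?_)
    have ht1 : (t:ℝ) < 1 := by exact_mod_cast ht
    have hz : ((t:ℝ):ℂ) ∈ ball (0:ℂ) 1 := by
      rw [mem_ball_zero_iff]
      simpa [Complex.norm_real] using by exact_mod_cast ht1.trans_le le_rfl
    have hs : Summable (fun k => ‖c k * ((t:ℝ):ℂ)^k‖) := ((hc _ hz).summable).norm
    refine FormalMultilinearSeries.le_radius_of_summable _ ?_
    convert hs using 2 with k
    rw [FormalMultilinearSeries.ofScalars_norm]
    simp [Real.norm_eq_abs, _root_.abs_of_nonneg t.coe_nonneg]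
  · exact one_pos
  · intro y hy
    have : y ∈ ball (0:ℂ) 1 := memEm hy
    simp only [zero_add]
    convert hc y this using 1
    case e'_3 => rfl
    funext n
    rw [FormalMultilinearSeries.ofScalars_apply_eq, smul_eq_mul]

lemma hasSum_zmul_deriv {c : ℕ → ℂ} {F : ℂ → ℂ}
    (hc : ∀ z ∈ ball (0:ℂ) 1, HasSum (fun k => c k * z ^ k) (F z)) :
    ∀ z ∈ ball (0:ℂ) 1,
      HasSum (fun (n : ℕ) => ((n:ℂ)+1) * c (n+1) * z^(n+1)) (z * deriv F z) := by
  intro z hz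
  have H := (reprPS hc).fderiv
  have h1 := H.hasSum (memEm' hz)
  have h2 := h1.mapL (ContinuousLinearMap.apply ℂ ℂ z)
  convert h2 using 1
  case e'_3 => rfl
  · funext n
    have := FormalMultilinearSeries.derivSeries_apply_diag
      (p := FormalMultilinearSeries.ofScalars ℂ c) n z
    simp only [ContinuousLinearMap.apply_apply]
    rw [this, FormalMultilinearSeries.ofScalars_apply_eq]
    rw [smul_eq_mul, nsmul_eq_mul]
    push_cast
    ring
  · simp only [zero_add, ContinuousLinearMap.apply_apply]
    have : z = z • (1:ℂ) := by simp
    conv_rhs => rw [this, ContinuousLinearMap.map_smul]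
    rw [fderiv_apply_one_eq_deriv]
    simp [smul_eq_mul]

lemma coeff_unique {c d : ℕ → ℂ} {F : ℂ → ℂ}
    (hc : ∀ z ∈ ball (0:ℂ) 1, HasSum (fun k => c k * z ^ k) (F z))
    (hd : ∀ z ∈ ball (0:ℂ) 1, HasSum (fun k => d k * z ^ k) (F z)) : c = d := by
  have := (reprPS hc).hasFPowerSeriesAt.eq_formalMultilinearSeries
    (reprPS hd).hasFPowerSeriesAt
  exact FormalMultilinearSeries.ofScalars_series_injective (E := ℂ) (𝕜 := ℂ) this

lemma schwarzPick0 {f : ℂ → ℂ} (hd : DifferentiableOn ℂ f (ball (0:ℂ) 1))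
    (hm : Set.MapsTo f (ball (0:ℂ) 1) (ball (0:ℂ) 1)) :
    ‖deriv f 0‖ ≤ 1 - ‖f 0‖ ^ 2 := by
  set c : ℂ := f 0 with hcdef
  have h0 : (0:ℂ) ∈ ball (0:ℂ) 1 := by simp
  have hc1 : ‖c‖ < 1 := by simpa [mem_ball_zero_iff] using hm h0
  have hns : normSq c < 1 := by
    rw [← Complex.sq_norm]
    nlinarith [norm_nonneg c]
  have key : ∀ w : ℂ, ‖w‖ < 1 →
      ‖w - c‖ < ‖1 - (starRingEnd ℂ) c * w‖ := by
    intro w hw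
    have hnw : normSq w < 1 := by
      rw [← Complex.sq_norm]; nlinarith [norm_nonneg w]
    have hid : normSq (1 - (starRingEnd ℂ) c * w) - normSq (w - c)
        = (1 - normSq c) * (1 - normSq w) := by
      simp only [Complex.normSq_apply, Complex.sub_re, Complex.sub_im, Complex.one_re,
        Complex.one_im, Complex.mul_re, Complex.mul_im, Complex.conj_re, Complex.conj_im]
      ring
    have hlt : normSq (w - c) < normSq (1 - (starRingEnd ℂ) c * w) := by nlinarith
    have := Real.sqrt_lt_sqrt (normSq_nonneg _) hlt
    simpa [Complex.norm_def] using this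
  have hden : ∀ w : ℂ, ‖w‖ < 1 → 1 - (starRingEnd ℂ) c * w ≠ 0 := by
    intro w hw heq
    have := key w hw
    rw [heq] at this
    simp at this
    exact (norm_nonneg _).not_gt this
  set φ : ℂ → ℂ := fun w => (w - c) * (1 - (starRingEnd ℂ) c * w)⁻¹ with hφ
  have hφ0 : φ c = 0 := by simp [hφ]
  have hφd : ∀ w : ℂ, ‖w‖ < 1 → DifferentiableAt ℂ φ w := by
    intro w hw
    apply DifferentiableAt.mul
    · exact differentiableAt_fun_id.sub (differentiableAt_const c)
    · exact (((differentiableAt_const (1:ℂ)).sub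
        ((differentiableAt_const _).mul differentiableAt_fun_id)).inv (hden w hw))
  set ψ : ℂ → ℂ := φ ∘ f with hψ
  have hψd : DifferentiableOn ℂ ψ (ball (0:ℂ) 1) := by
    intro w hw
    exact ((hφd (f w) (by simpa [mem_ball_zero_iff] using hm hw)).comp w
      (hd.differentiableAt (isOpen_ball.mem_nhds hw))).differentiableWithinAt
  have hψ0 : ψ 0 = 0 := by simp [hψ, ← hcdef, hφ0]
  have hψm : Set.MapsTo ψ (ball (0:ℂ) 1) (ball (ψ 0) 1) := by
    intro w hw
    rw [hψ0, mem_ball_zero_iff]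
    have hfw : ‖f w‖ < 1 := by simpa [mem_ball_zero_iff] using hm hw
    have hpos : 0 < ‖1 - (starRingEnd ℂ) c * f w‖ :=
      norm_pos_iff.mpr (hden _ hfw)
    show ‖φ (f w)‖ < 1
    rw [hφ]
    simp only [norm_mul, norm_inv]
    rw [mul_inv_lt_iff₀ hpos, one_mul]
    exact key _ hfw
  have hSch := Complex.norm_deriv_le_div_of_mapsTo_ball hψd (hψm.mono_right ball_subset_closedBall) one_pos
  -- derivative computations
  have hfd : DifferentiableAt ℂ f 0 := hd.differentiableAt (isOpen_ball.mem_nhds h0)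
  have h2 : HasDerivAt (fun w => 1 - (starRingEnd ℂ) c * w) (-((starRingEnd ℂ) c)) c := by
    simpa using ((hasDerivAt_id c).const_mul ((starRingEnd ℂ) c)).const_sub 1
  have h3 := h2.inv (hden c hc1)
  have h1 : HasDerivAt (fun w => w - c) 1 c := (hasDerivAt_id c).sub_const c
  have hφc : HasDerivAt φ ((1 - (starRingEnd ℂ) c * c)⁻¹) c := by
    have h4 := h1.mul h3
    convert h4 using 1
    case e'_9 => simp
    all_goals rfl
  have hψ' : HasDerivAt ψ ((1 - (starRingEnd ℂ) c * c)⁻¹ * deriv f 0) 0 := by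
    have := hφc.comp 0 hfd.hasDerivAt
    simpa [hψ, ← hcdef] using this
  have habs : ‖1 - (starRingEnd ℂ) c * c‖ = 1 - normSq c := by
    have : (starRingEnd ℂ) c * c = (normSq c : ℂ) := by
      rw [mul_comm, Complex.mul_conj]
    rw [this, ← Complex.ofReal_one, ← Complex.ofReal_sub, Complex.norm_real, Real.norm_eq_abs]
    exact abs_of_pos (by linarith)
  have hd0 : ‖deriv ψ 0‖ ≤ 1 := by simpa using hSch
  rw [hψ'.deriv] at hd0
  simp only [norm_mul, norm_inv, habs] at hd0
  rw [inv_mul_le_iff₀ (by linarith), mul_one] at hd0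
  calc ‖deriv f 0‖ ≤ 1 - normSq c := hd0
    _ = 1 - ‖f 0‖ ^ 2 := by rw [Complex.sq_norm]

lemma coeff_bound {h : ℂ → ℂ} {a : ℕ → ℂ}
    (hha : ∀ z ∈ ball (0:ℂ) 1, HasSum (fun k => a k * z ^ k) (h z))
    (hb : ∀ z ∈ ball (0:ℂ) 1, ‖h z‖ < 1)
    (n : ℕ) (hn : 1 ≤ n) :
    ‖a n‖ ≤ 1 - ‖a 0‖ ^ 2 := by
  have hn0 : n ≠ 0 := by omega
  have hnC : (n:ℂ) ≠ 0 := Nat.cast_ne_zero.mpr hn0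
  set ε : ℂ := Complex.exp (2 * Real.pi * Complex.I / n) with hε
  have hprim : IsPrimitiveRoot ε n := Complex.isPrimitiveRoot_exp n hn0
  have hεn : ε ^ n = 1 := hprim.pow_eq_one
  have hεabs : ‖ε‖ = 1 := by
    have h2 : (2 * (Real.pi:ℂ) * Complex.I / n) = ((2*Real.pi/n : ℝ) : ℂ) * Complex.I := by
      push_cast; ring
    rw [hε, show (2 * ↑Real.pi * Complex.I / (n:ℂ)) = ((2*Real.pi/n : ℝ) : ℂ) * Complex.I from by push_cast; ring,
      Complex.norm_exp_ofReal_mul_I]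
  have main : ∀ w ∈ ball (0:ℂ) 1, ∃ v : ℂ, ‖v‖ < 1 ∧
      HasSum (fun m => a (n*m) * w^m) v := by
    intro w hw
    obtain ⟨z, hz1, hzn⟩ : ∃ z : ℂ, ‖z‖ < 1 ∧ z ^ n = w := by
      rcases eq_or_ne w 0 with rfl | hw0
      · exact ⟨0, by simp, by simp [zero_pow hn0]⟩
      · refine ⟨w ^ ((n:ℂ))⁻¹, ?_, Complex.cpow_nat_inv_pow w hn0⟩
        have hco : ((n:ℂ))⁻¹ = ((((n:ℝ))⁻¹ : ℝ) : ℂ) := by push_cast; rfl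
        rw [hco, Complex.norm_cpow_real]
        exact Real.rpow_lt_one (norm_nonneg w)
          (by simpa [mem_ball_zero_iff] using hw)
          (by positivity)
    have hmem : ∀ j : ℕ, ε^j * z ∈ ball (0:ℂ) 1 := by
      intro j
      rw [mem_ball_zero_iff]
      show ‖ε^j * z‖ < 1
      rw [norm_mul, norm_pow, hεabs, one_pow, one_mul]
      exact hz1
    have hs1 : HasSum (fun k => ∑ j ∈ Finset.range n, a k * (ε^j*z)^k)
        (∑ j ∈ Finset.range n, h (ε^j*z)) :=
      hasSum_sum (fun j _ => hha _ (hmem j))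
    have hs2 := hs1.mul_left ((n:ℂ))⁻¹
    have keyk : ∀ k : ℕ, ((n:ℂ))⁻¹ * ∑ j ∈ Finset.range n, a k * (ε^j*z)^k
        = if n ∣ k then a k * z^k else 0 := by
      intro k
      have hterm : ∀ j, a k * (ε^j*z)^k = (ε^k)^j * (a k * z^k) := by
        intro j
        rw [mul_pow, ← pow_mul, mul_comm j k, pow_mul]
        ring
      rw [Finset.sum_congr rfl (fun j _ => hterm j), ← Finset.sum_mul]
      by_cases hdvd : n ∣ k
      · have hone : ε ^ k = 1 := (hprim.pow_eq_one_iff_dvd k).mpr hdvd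
        rw [if_pos hdvd, hone]
        simp only [one_pow, Finset.sum_const, Finset.card_range, nsmul_eq_mul, mul_one]
        rw [← mul_assoc, inv_mul_cancel₀ hnC, one_mul]
      · have hne : ε ^ k ≠ 1 := fun hcon => hdvd ((hprim.pow_eq_one_iff_dvd k).mp hcon)
        rw [if_neg hdvd, geom_sum_eq hne]
        rw [← pow_mul, mul_comm k n, pow_mul, hεn, one_pow]
        simp
    have hs3 : HasSum (fun k => if n ∣ k then a k * z^k else 0)
        (((n:ℂ))⁻¹ * ∑ j ∈ Finset.range n, h (ε^j*z)) := by
      simpa only [keyk] using hs2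
    have hinj : Function.Injective (fun m : ℕ => n * m) := fun x y hxy =>
      Nat.eq_of_mul_eq_mul_left (Nat.pos_of_ne_zero hn0) hxy
    have hside : ∀ k ∉ Set.range (fun m : ℕ => n * m),
        (if n ∣ k then a k * z^k else 0) = 0 := by
      intro k hk
      rw [if_neg]
      intro ⟨m, hm⟩
      exact hk ⟨m, hm.symm⟩
    have hs4 : HasSum (fun m => a (n*m) * w^m)
        (((n:ℂ))⁻¹ * ∑ j ∈ Finset.range n, h (ε^j*z)) := by
      have h5 := (Function.Injective.hasSum_iff hinj hside).mpr hs3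
      have hfun : ((fun k => if n ∣ k then a k * z^k else 0) ∘ (fun m : ℕ => n*m))
          = fun m => a (n*m) * w^m := by
        funext m
        simp only [Function.comp_apply]
        rw [if_pos ⟨m, rfl⟩, ← hzn, ← pow_mul]
      rwa [hfun] at h5
    refine ⟨_, ?_, hs4⟩
    -- abs bound
    have habs1 : ‖((n:ℂ))⁻¹ * ∑ j ∈ Finset.range n, h (ε^j*z)‖
        ≤ ((n:ℝ))⁻¹ * ∑ j ∈ Finset.range n, ‖h (ε^j*z)‖ := by
      rw [norm_mul, norm_inv, Complex.norm_natCast]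
      gcongr
      exact norm_sum_le _ _
    have habs2 : ∑ j ∈ Finset.range n, ‖h (ε^j*z)‖
        < ∑ j ∈ Finset.range n, 1 := by
      apply Finset.sum_lt_sum_of_nonempty
      · exact Finset.nonempty_range_iff.mpr hn0
      · intro j _
        exact hb _ (hmem j)
    have : ((n:ℝ))⁻¹ * ∑ j ∈ Finset.range n, ‖h (ε^j*z)‖
        < ((n:ℝ))⁻¹ * n := by
      apply mul_lt_mul_of_pos_left _ (by positivity)
      simpa using habs2
    calc ‖_‖ ≤ _ := habs1
      _ < ((n:ℝ))⁻¹ * n := this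
      _ = 1 := by field_simp
  set G : ℂ → ℂ := fun w => ∑' m, a (n*m) * w^m with hGdef
  have hGsum : ∀ w ∈ ball (0:ℂ) 1, HasSum (fun m => a (n*m) * w^m) (G w) := by
    intro w hw
    obtain ⟨v, hv1, hv⟩ := main w hw
    have : G w = v := hv.tsum_eq
    rw [this]
    exact hv
  have hGlt : ∀ w ∈ ball (0:ℂ) 1, ‖G w‖ < 1 := by
    intro w hw
    obtain ⟨v, hv1, hv⟩ := main w hw
    rw [show G w = v from hv.tsum_eq]
    exact hv1
  have HG := reprPS hGsum
  have hGd : DifferentiableOn ℂ G (ball (0:ℂ) 1) :=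
    (HG.differentiableOn).mono (fun y hy => memEm' hy)
  have hmaps : Set.MapsTo G (ball (0:ℂ) 1) (ball (0:ℂ) 1) := by
    intro w hw
    rw [mem_ball_zero_iff]
    exact hGlt w hw
  have hsp := schwarzPick0 hGd hmaps
  have h0 : (0:ℂ) ∈ ball (0:ℂ) 1 := by simp
  have hG0 : G 0 = a 0 := by
    have h1 : HasSum (fun m : ℕ => a (n*m) * 0^m) (a (n*0) * 0^0) :=
      hasSum_single 0 (fun m hm => by simp [zero_pow hm])
    exact (hGsum 0 h0).unique (by simpa using h1)
  have hderiv : deriv G 0 = a n := by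
    rw [HG.hasFPowerSeriesAt.deriv, FormalMultilinearSeries.ofScalars_apply_eq]
    simp
  rw [hderiv, hG0] at hsp
  exact hsp




open Metric

/-- Bohr inequality for harmonic mappings with dilatation `g'(z) = η z h'(z)`, `|η| = 1`:
if `|h| < 1` on the unit disk, then `|a₀| + ∑_{k≥1} (|aₖ| + |bₖ|) rᵏ ≤ 1` for every
`0 ≤ r < 1` satisfying `5r + 2(1-r)·log(1-r) ≤ 1`. -/
theorem stmt10 (h g : ℂ → ℂ) (a b : ℕ → ℂ) (hb0 : b 0 = 0)
    (hha : ∀ z ∈ ball (0:ℂ) 1, HasSum (fun k => a k * z ^ k) (h z))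
    (hga : ∀ z ∈ ball (0:ℂ) 1, HasSum (fun k => b k * z ^ k) (g z))
    (hhd : DifferentiableOn ℂ h (ball (0:ℂ) 1))
    (hgd : DifferentiableOn ℂ g (ball (0:ℂ) 1))
    (hb : ∀ z ∈ ball (0:ℂ) 1, ‖h z‖ < 1)
    (η : ℂ) (hη : ‖η‖ = 1)
    (hd : ∀ z ∈ ball (0:ℂ) 1, deriv g z = η * z * deriv h z)
    (r : ℝ) (hr0 : 0 ≤ r) (hr1 : r < 1)
    (hr : 5 * r + 2 * (1 - r) * Real.log (1 - r) ≤ 1) :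
    ‖a 0‖
      + (∑' k : ℕ, (‖a (k+1)‖ + ‖b (k+1)‖) * r ^ (k+1))
      ≤ 1 := by
  classical
  have h0mem : (0:ℂ) ∈ ball (0:ℂ) 1 := by simp
  have ha0 : h 0 = a 0 := by
    have h1 : HasSum (fun k : ℕ => a k * 0^k) (a 0 * 0^0) :=
      hasSum_single 0 (fun m hm => by simp [zero_pow hm])
    exact (hha 0 h0mem).unique (by simpa using h1)
  set A := ‖a 0‖ with hA
  have hA1 : A < 1 := by rw [hA, ← ha0]; exact hb 0 h0mem
  have hA0 : 0 ≤ A := norm_nonneg _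
  have hcoeff : ∀ k : ℕ, 1 ≤ k → ‖a k‖ ≤ 1 - A^2 :=
    fun k hk => coeff_bound hha hb k hk
  -- coefficient identity for b
  set d : ℕ → ℂ := fun j => Nat.rec 0 (fun k _ => η * (k:ℂ) * a k) j with hddef
  have hgsum2 : ∀ z ∈ ball (0:ℂ) 1,
      HasSum (fun k : ℕ => ((k:ℂ) * b k) * z^k) (z * deriv g z) := by
    intro z hz
    have h1 := hasSum_zmul_deriv hga z hz
    have hside : ∀ k ∉ Set.range Nat.succ, ((k:ℂ) * b k) * z^k = 0 := by
      intro k hk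
      have hk0 : k = 0 := by
        rcases Nat.eq_zero_or_pos k with h'|h'
        · exact h'
        · exact absurd ⟨k-1, by omega⟩ hk
      simp [hk0]
    apply (Function.Injective.hasSum_iff Nat.succ_injective hside).mp
    convert h1 using 1
    funext n
    simp only [Function.comp_apply, Nat.succ_eq_add_one]
    push_cast
    ring
  have hhsum2 : ∀ z ∈ ball (0:ℂ) 1, HasSum (fun j : ℕ => d j * z^j) (z * deriv g z) := by
    intro z hz
    have h1 := (hasSum_zmul_deriv hha z hz).mul_left (η * z)
    have hval : η * z * (z * deriv h z) = z * deriv g z := by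
      rw [hd z hz]; ring
    rw [hval] at h1
    have hinj2 : Function.Injective (fun m : ℕ => m + 2) := fun x y hxy => by
      have : x + 2 = y + 2 := hxy
      omega
    have hside : ∀ j ∉ Set.range (fun m : ℕ => m + 2), d j * z^j = 0 := by
      intro j hj
      have hj01 : j = 0 ∨ j = 1 := by
        by_contra hcon
        push_neg at hcon
        exact hj ⟨j - 2, show j - 2 + 2 = j by omega⟩
      rcases hj01 with rfl|rfl
      · simp [hddef]
      · simp [hddef]
    apply (Function.Injective.hasSum_iff hinj2 hside).mp
    convert h1 using 1
    case e'_3 => rfl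
    funext m
    simp only [Function.comp_apply]
    show d (m+2) * z^(m+2) = _
    have hdm : d (m+2) = η * ((m+1 : ℕ):ℂ) * a (m+1) := rfl
    rw [hdm]
    push_cast
    ring
  have huniq : (fun k : ℕ => (k:ℂ) * b k) = d := coeff_unique hgsum2 hhsum2
  have hbk : ∀ k : ℕ, ((k:ℂ)+1) * b (k+1) = η * (k:ℂ) * a k := by
    intro k
    have h1 := congrFun huniq (k+1)
    have h2 : d (k+1) = η * (k:ℂ) * a k := rfl
    rw [h2] at h1
    push_cast at h1
    exact h1
  have habsb : ∀ k : ℕ, ‖b (k+1)‖ = (k:ℝ)/((k:ℝ)+1) * ‖a k‖ := by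
    intro k
    have hk1 : ((k:ℂ)+1) ≠ 0 := Nat.cast_add_one_ne_zero k
    have hbk' : b (k+1) = η * (k:ℂ) * a k / ((k:ℂ)+1) := by
      rw [eq_div_iff hk1]
      linear_combination hbk k
    rw [hbk', norm_div, norm_mul, norm_mul, hη, one_mul]
    have hac1 : ‖(k:ℂ)‖ = (k:ℝ) := Complex.norm_natCast k
    have hac2 : ‖(k:ℂ)+1‖ = (k:ℝ)+1 := by
      rw [show ((k:ℂ)+1) = (((k+1:ℕ)):ℂ) by push_cast; ring, Complex.norm_natCast]
      push_cast; ring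
    rw [hac1, hac2]
    ring
  -- series values
  have hrabs : |r| < 1 := by rw [_root_.abs_of_nonneg hr0]; exact hr1
  have hgeo : HasSum (fun k : ℕ => r^(k+1)) (r/(1-r)) := by
    have h1 := (hasSum_geometric_of_lt_one hr0 hr1).mul_left r
    have he : (fun k : ℕ => r^(k+1)) = fun k : ℕ => r * r^k := by
      funext k; rw [pow_succ]; ring
    rw [he, div_eq_mul_inv]
    exact h1
  have hlog : HasSum (fun k : ℕ => r^(k+1)/((k:ℝ)+1)) (-Real.log (1-r)) := by
    exact Real.hasSum_pow_div_log_of_abs_lt_one hrabs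
  set T : ℝ := 2*r/(1-r) + Real.log (1-r) with hT
  have hTsum : HasSum (fun k : ℕ => (1 + (k:ℝ)/((k:ℝ)+1)) * r^(k+1)) T := by
    have h2 := (hgeo.mul_left 2).sub hlog
    convert h2 using 1
    case e'_3 => rfl
    · funext k
      have hk : (k:ℝ)+1 ≠ 0 := by positivity
      field_simp
      ring
    · rw [hT]; ring
  have hTnonneg : 0 ≤ T := by
    refine hasSum_le (fun k => ?_) hasSum_zero hTsum
    have h1 : 0 ≤ (k:ℝ)/((k:ℝ)+1) := by positivity
    have h2 : 0 ≤ r^(k+1) := by positivity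
    nlinarith
  have h2T : 2 * T ≤ 1 := by
    have hu : 0 < 1 - r := by linarith
    have hexp : 2*T*(1-r) = 4*r + 2*(1-r)*Real.log (1-r) := by
      rw [hT]; field_simp; ring
    have h1 : 2*T*(1-r) ≤ 1*(1-r) := by rw [hexp]; linarith [hr]
    exact le_of_mul_le_mul_right (by linarith [h1]) hu
  -- termwise bound
  have hterm : ∀ k : ℕ, (‖a (k+1)‖ + ‖b (k+1)‖) * r^(k+1)
      ≤ (1 - A^2) * ((1 + (k:ℝ)/((k:ℝ)+1)) * r^(k+1)) := by
    intro k
    have hrk : (0:ℝ) ≤ r^(k+1) := by positivity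
    have h1 : ‖a (k+1)‖ ≤ 1 - A^2 := hcoeff (k+1) (by omega)
    have h2 : ‖b (k+1)‖ ≤ (k:ℝ)/((k:ℝ)+1) * (1 - A^2) := by
      rw [habsb k]
      rcases Nat.eq_zero_or_pos k with rfl|hk
      · simp
      · have h3 := hcoeff k hk
        have hfrac : 0 ≤ (k:ℝ)/((k:ℝ)+1) := by positivity
        exact mul_le_mul_of_nonneg_left h3 hfrac
    have hsum : ‖a (k+1)‖ + ‖b (k+1)‖
        ≤ (1-A^2) * (1 + (k:ℝ)/((k:ℝ)+1)) := by
      calc ‖a (k+1)‖ + ‖b (k+1)‖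
          ≤ (1 - A^2) + (k:ℝ)/((k:ℝ)+1) * (1 - A^2) := add_le_add h1 h2
        _ = (1-A^2) * (1 + (k:ℝ)/((k:ℝ)+1)) := by ring
    calc (‖a (k+1)‖ + ‖b (k+1)‖) * r^(k+1)
        ≤ ((1-A^2) * (1 + (k:ℝ)/((k:ℝ)+1))) * r^(k+1) :=
          mul_le_mul_of_nonneg_right hsum hrk
      _ = (1-A^2) * ((1 + (k:ℝ)/((k:ℝ)+1)) * r^(k+1)) := by ring
  have hMsum : HasSum (fun k : ℕ => (1-A^2) * ((1 + (k:ℝ)/((k:ℝ)+1)) * r^(k+1)))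
      ((1-A^2)*T) := hTsum.mul_left _
  have hnn : ∀ k : ℕ, 0 ≤ (‖a (k+1)‖ + ‖b (k+1)‖) * r^(k+1) :=
    fun k => mul_nonneg (add_nonneg (norm_nonneg _) (norm_nonneg _))
      (by positivity)
  have hLsummable : Summable
      (fun k : ℕ => (‖a (k+1)‖ + ‖b (k+1)‖) * r^(k+1)) :=
    Summable.of_nonneg_of_le hnn hterm hMsum.summable
  have htsum : (∑' k : ℕ, (‖a (k+1)‖ + ‖b (k+1)‖) * r^(k+1))
      ≤ (1-A^2)*T := by
    rw [← hMsum.tsum_eq]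
    exact Summable.tsum_le_tsum hterm hLsummable hMsum.summable
  have hinner : (0:ℝ) ≤ 1 - 2*T + (1-A)*T := by
    have := mul_nonneg (sub_nonneg.mpr hA1.le) hTnonneg
    linarith
  have key2 : 0 ≤ (1-A) * ((1 - 2*T) + (1-A)*T) :=
    mul_nonneg (by linarith) (by linarith [hinner])
  nlinarith [key2, htsum]
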